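/- Let n be a positive integer and k ≥ 2 an integer. Let P and Q be a set of vertices and a set of edges of the path graph P_n with |P| = p and |Q| = q, such that every connected component of (P_n − P) − Q has diameter less than k. Then n ≤ (p + q + 1)k + p. -/

import Mathlib

open SimpleGraph

/-- A graph is in a *failure state* for `k` if every connected component has
diameter less than `k`, i.e. every pair of mutually reachable vertices is at
distance less than `k`. -/
def FailureState {V : Type*} (G : SimpleGraph V) (k : ℕ) : Prop :=
  ∀ u v : V, G.Reachable u v → G.dist u v < k

/-- `G` contains `m` pairwise vertex-disjoint paths of length `k`. -/
def HasDisjointPaths {V : Type*} (G : SimpleGraph V) (k m : ℕ) : Prop :=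
  ∃ (u v : Fin m → V) (P : ∀ i, G.Walk (u i) (v i)),
    (∀ i, (P i).IsPath ∧ (P i).length = k) ∧
    ∀ i j, i ≠ j → ∀ x, x ∈ (P i).support → x ∉ (P j).support

/-- The `k`-diameter component vertex connectivity: the minimum size of a set of
vertices whose deletion leaves every component with diameter less than `k`. -/
noncomputable def CV {V : Type*} (G : SimpleGraph V) (k : ℕ) : ℕ :=
  sInf {n | ∃ V' : Finset V, V'.card = n ∧
    FailureState (G.induce ((V' : Set V))ᶜ) k}

/-- The `k`-diameter component edge connectivity: the minimum size of a set of
edges whose deletion leaves every component with diameter less than `k`. -/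
noncomputable def CE {V : Type*} (G : SimpleGraph V) (k : ℕ) : ℕ :=
  sInf {n | ∃ E' : Finset (Sym2 V), (E' : Set (Sym2 V)) ⊆ G.edgeSet ∧ E'.card = n ∧
    FailureState (G.deleteEdges (E' : Set (Sym2 V))) k}

/-- The `k`-diameter component connectivity function: the minimum over all
`p`-element vertex sets `V'` of `CE k (G - V')`. -/
noncomputable def CM {V : Type*} (G : SimpleGraph V) (k p : ℕ) : ℕ :=
  sInf {q | ∃ V' : Finset V, V'.card = p ∧
    CE (G.induce ((V' : Set V))ᶜ) k = q}

section Aux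

variable {n : ℕ} (P : Finset (Fin n))
  (Q : Finset (Sym2 ((P : Set (Fin n))ᶜ : Set (Fin n))))

/-- position `m` is "cut": either vertex `m` is deleted, or the edge `(m, m+1)` is deleted. -/
def Cut (m : ℕ) : Prop :=
  (∃ h : m < n, (⟨m, h⟩ : Fin n) ∈ P) ∨
  (∃ (h : m < n) (h' : m + 1 < n) (hm : (⟨m, h⟩ : Fin n) ∈ ((P : Set (Fin n))ᶜ))
      (hm' : (⟨m + 1, h'⟩ : Fin n) ∈ ((P : Set (Fin n))ᶜ)),
    s(⟨⟨m, h⟩, hm⟩, ⟨⟨m + 1, h'⟩, hm'⟩) ∈ Q)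

noncomputable def gfun (i : ℕ) : ℕ :=
  letI := Classical.decPred (Cut P Q)
  ((Finset.range i).filter (Cut P Q)).card

lemma gfun_le (i : ℕ) : gfun P Q i ≤ P.card + Q.card := by
  classical
  unfold gfun
  set c1 : ℕ → Prop := fun m => ∃ h : m < n, (⟨m, h⟩ : Fin n) ∈ P with hc1
  set c2 : ℕ → Prop := fun m => ∃ (h : m < n) (h' : m + 1 < n)
      (hm : (⟨m, h⟩ : Fin n) ∈ ((P : Set (Fin n))ᶜ))
      (hm' : (⟨m + 1, h'⟩ : Fin n) ∈ ((P : Set (Fin n))ᶜ)),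
    s(⟨⟨m, h⟩, hm⟩, ⟨⟨m + 1, h'⟩, hm'⟩) ∈ Q with hc2
  have hsub : ((Finset.range i).filter (Cut P Q)) ⊆
      ((Finset.range i).filter c1) ∪ ((Finset.range i).filter c2) := by
    intro m hm
    simp only [Finset.mem_filter, Finset.mem_union] at hm ⊢
    rcases hm with ⟨hr, h | h⟩
    · exact Or.inl ⟨hr, h⟩
    · exact Or.inr ⟨hr, h⟩
  have h1 : ((Finset.range i).filter c1).card ≤ P.card := by
    apply Finset.card_le_card_of_surjOn (fun v : Fin n => v.val)
    intro m hm
    simp only [Finset.coe_filter, Set.mem_setOf_eq] at hm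
    obtain ⟨_, h, hP⟩ := hm
    exact ⟨⟨m, h⟩, hP, rfl⟩
  have h2 : ((Finset.range i).filter c2).card ≤ Q.card := by
    apply Finset.card_le_card_of_surjOn
      (Sym2.lift ⟨fun a b => min a.1.1 b.1.1, fun a b => min_comm _ _⟩)
    intro m hm
    simp only [Finset.coe_filter, Set.mem_setOf_eq] at hm
    obtain ⟨_, h, h', hm1, hm2, hQ⟩ := hm
    refine ⟨_, hQ, ?_⟩
    simp
  calc ((Finset.range i).filter (Cut P Q)).card
      ≤ _ := Finset.card_le_card hsub
    _ ≤ _ := Finset.card_union_le _ _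
    _ ≤ P.card + Q.card := Nat.add_le_add h1 h2

end Aux

section Graph

variable {n : ℕ} {P : Finset (Fin n)}
  {Q : Finset (Sym2 ((P : Set (Fin n))ᶜ : Set (Fin n)))}

abbrev GG (P : Finset (Fin n)) (Q : Finset (Sym2 ((P : Set (Fin n))ᶜ : Set (Fin n)))) :
    SimpleGraph ((P : Set (Fin n))ᶜ : Set (Fin n)) :=
  ((SimpleGraph.pathGraph n).induce ((P : Set (Fin n)))ᶜ).deleteEdges
    (Q : Set (Sym2 ((P : Set (Fin n))ᶜ : Set (Fin n))))

lemma adj_iff {a b : ((P : Set (Fin n))ᶜ : Set (Fin n))} :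
    (GG P Q).Adj a b ↔ ((a.1.1 + 1 = b.1.1 ∨ b.1.1 + 1 = a.1.1) ∧ s(a, b) ∉ Q) := by
  simp [SimpleGraph.deleteEdges_adj, SimpleGraph.comap_adj, SimpleGraph.pathGraph_adj]

lemma walk_length_ge {a b : ((P : Set (Fin n))ᶜ : Set (Fin n))} (w : (GG P Q).Walk a b) :
    a.1.1 ≤ b.1.1 + w.length ∧ b.1.1 ≤ a.1.1 + w.length := by
  induction w with
  | nil => simp
  | @cons u c v h p ih =>
    rw [adj_iff] at h
    simp only [SimpleGraph.Walk.length_cons]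
    omega

end Graph

section Graph2

variable {n : ℕ} {P : Finset (Fin n)}
  {Q : Finset (Sym2 ((P : Set (Fin n))ᶜ : Set (Fin n)))}

lemma reach_of_no_cut : ∀ (d : ℕ) (a b : ((P : Set (Fin n))ᶜ : Set (Fin n))),
    b.1.1 = a.1.1 + d → (∀ m, a.1.1 ≤ m → m < b.1.1 → ¬ Cut P Q m) →
    (GG P Q).Reachable a b := by
  intro d
  induction d with
  | zero =>
    intro a b hb _
    have : a = b := Subtype.ext (Fin.ext (by omega))
    exact this ▸ SimpleGraph.Reachable.refl a
  | succ d ih =>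
    intro a b hb hm
    have hlt : a.1.1 + 1 < n := by
      have := b.1.isLt
      omega
    have ha : a.1.1 < n := a.1.isLt
    have hmem : (⟨a.1.1 + 1, hlt⟩ : Fin n) ∈ ((P : Set (Fin n))ᶜ) := by
      rcases Nat.lt_or_ge (a.1.1 + 1) b.1.1 with h | h
      · -- interior vertex: not cut, so not in P
        have hc := hm (a.1.1 + 1) (by omega) h
        simp only [Set.mem_compl_iff, Finset.mem_coe]
        intro hP
        exact hc (Or.inl ⟨hlt, hP⟩)
      · -- it is b itself
        have : a.1.1 + 1 = b.1.1 := by omega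
        have : (⟨a.1.1 + 1, hlt⟩ : Fin n) = b.1 := Fin.ext this
        rw [this]
        exact b.2
    set a' : ((P : Set (Fin n))ᶜ : Set (Fin n)) := ⟨⟨a.1.1 + 1, hlt⟩, hmem⟩ with ha'
    have hadj : (GG P Q).Adj a a' := by
      rw [adj_iff]
      constructor
      · left; rfl
      · intro hQmem
        have hc := hm a.1.1 le_rfl (by omega)
        apply hc
        right
        refine ⟨ha, hlt, a.2, hmem, ?_⟩
        convert hQmem using 2
    exact hadj.reachable.trans (ih a' b (by simp [ha']; omega)
      (fun m h1 h2 => hm m (by simp [ha'] at h1; omega) h2))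

lemma gap_lt {k : ℕ} (hfail : FailureState (GG P Q) k)
    (a b : ((P : Set (Fin n))ᶜ : Set (Fin n))) (hab : a.1.1 ≤ b.1.1)
    (hg : gfun P Q a.1.1 = gfun P Q b.1.1) : b.1.1 - a.1.1 < k := by
  classical
  have hnocut : ∀ m, a.1.1 ≤ m → m < b.1.1 → ¬ Cut P Q m := by
    letI := Classical.decPred (Cut P Q)
    have hsub : ((Finset.range a.1.1).filter (Cut P Q)) ⊆
        ((Finset.range b.1.1).filter (Cut P Q)) :=
      Finset.filter_subset_filter _ (Finset.range_subset_range.mpr hab)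
    have heq := Finset.eq_of_subset_of_card_le hsub (by
      unfold gfun at hg
      omega)
    intro m h1 h2 hc
    have : m ∈ ((Finset.range b.1.1).filter (Cut P Q)) := by
      simp [Finset.mem_filter, hc, h2]
    rw [← heq] at this
    simp [Finset.mem_filter] at this
    omega
  have hreach := reach_of_no_cut (b.1.1 - a.1.1) a b (by omega) hnocut
  have hdist := hfail a b hreach
  obtain ⟨w, hw⟩ := hreach.exists_walk_length_eq_dist
  have := walk_length_ge w
  omega

end Graph2


/-- If deleting `p` vertices and then `q` edges from the path
graph on `n` vertices produces a failure state for `k`, then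
`n ≤ (p + q + 1) k + p`. -/
theorem pathGraph_mixed_bound (n k : ℕ) (hn : 0 < n) (hk : 2 ≤ k)
    (P : Finset (Fin n))
    (Q : Finset (Sym2 ((P : Set (Fin n))ᶜ : Set (Fin n))))
    (hQ : (Q : Set (Sym2 ((P : Set (Fin n))ᶜ : Set (Fin n)))) ⊆
      ((SimpleGraph.pathGraph n).induce ((P : Set (Fin n)))ᶜ).edgeSet)
    (hfail : FailureState
      (((SimpleGraph.pathGraph n).induce ((P : Set (Fin n)))ᶜ).deleteEdges
        (Q : Set (Sym2 ((P : Set (Fin n))ᶜ : Set (Fin n))))) k) :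
    n ≤ (P.card + Q.card + 1) * k + P.card := by
  classical
  have hfail' : FailureState (GG P Q) k := hfail
  set C : Finset (Fin n) := Pᶜ with hC
  have hmaps : ∀ x ∈ C, gfun P Q x.1 ∈ Finset.range (P.card + Q.card + 1) := by
    intro x _
    simp only [Finset.mem_range]
    exact Nat.lt_succ_of_le (gfun_le P Q x.1)
  have hcard := Finset.card_eq_sum_card_fiberwise hmaps
  have hfiber : ∀ t ∈ Finset.range (P.card + Q.card + 1),
      (C.filter (fun x => gfun P Q x.1 = t)).card ≤ k := by
    intro t _
    set F := C.filter (fun x => gfun P Q x.1 = t) with hF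
    by_cases hne : F.Nonempty
    · set i0 : Fin n := F.min' hne with hi0
      have hi0F : i0 ∈ F := F.min'_mem hne
      have hgap : ∀ x ∈ F, x.1 - i0.1 < k := by
        intro x hx
        have hi0C : i0 ∉ P := by
          have := (Finset.mem_filter.mp hi0F).1
          simpa [hC] using this
        have hxC : x ∉ P := by
          have := (Finset.mem_filter.mp hx).1
          simpa [hC] using this
        have hle : i0 ≤ x := F.min'_le x hx
        have hg : gfun P Q i0.1 = gfun P Q x.1 := by
          have h1 := (Finset.mem_filter.mp hi0F).2
          have h2 := (Finset.mem_filter.mp hx).2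
          
          omega
        exact gap_lt hfail' ⟨i0, by simpa using hi0C⟩ ⟨x, by simpa using hxC⟩ hle hg
      have : F.card ≤ (Finset.range k).card := by
        apply Finset.card_le_card_of_injOn (fun x => x.1 - i0.1)
        · intro x hx
          simp only [Finset.mem_range]
          exact Finset.mem_coe.mpr (Finset.mem_range.mpr (hgap x hx))
        · intro x hx y hy hxy
          have hx' : i0 ≤ x := F.min'_le x hx
          have hy' : i0 ≤ y := F.min'_le y hy
          have hx'' : i0.1 ≤ x.1 := hx'
          have hy'' : i0.1 ≤ y.1 := hy'
          have hxy' : x.1 - i0.1 = y.1 - i0.1 := hxy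
          exact Fin.ext (by omega)
      simpa using this
    · rw [Finset.not_nonempty_iff_eq_empty] at hne
      rw [hne]
      simp
  have hsum : ∑ t ∈ Finset.range (P.card + Q.card + 1),
      (C.filter (fun x => gfun P Q x.1 = t)).card ≤ (P.card + Q.card + 1) * k := by
    calc _ ≤ (Finset.range (P.card + Q.card + 1)).card • k :=
          Finset.sum_le_card_nsmul _ _ k hfiber
      _ = (P.card + Q.card + 1) * k := by simp [smul_eq_mul]
  have hcompl : P.card + C.card = n := by
    rw [hC]
    rw [Finset.card_add_card_compl]
    simp
  omega
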